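/- Let D be a nonempty connected open subset of ℂ, let Q be an analytic function on D, and let y₁, y₂ be analytic functions on D satisfying y₁'' + Q y₁ = 0 and y₂'' + Q y₂ = 0 on D, whose Wronskian y₁ y₂' − y₁' y₂ is nonzero at some point of D. Then for every z ∈ D with y₂(z) ≠ 0, the Schwarz derivative of y₁/y₂ is defined at z and S(y₁/y₂)(z) = 2 Q(z). -/

import Mathlib

/-- The Schwarz derivative `S(f) = f'''/f' - (3/2)(f''/f')²`. -/
noncomputable def schwarzian (f : ℂ → ℂ) (z : ℂ) : ℂ :=
  iteratedDeriv 3 f z / deriv f z - (3 / 2) * (iteratedDeriv 2 f z / deriv f z) ^ 2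

/-- If `y₁, y₂` are linearly independent solutions of `y'' + Q y = 0` on a domain `D`,
then `S(y₁/y₂) = 2Q` wherever `y₂ ≠ 0`. -/
theorem schwarzian_of_solution_quotient
    (D : Set ℂ) (hD : D.Nonempty) (hDo : IsOpen D) (hDc : IsConnected D)
    (Q y₁ y₂ : ℂ → ℂ)
    (hQ : AnalyticOnNhd ℂ Q D)
    (hy₁ : AnalyticOnNhd ℂ y₁ D) (hy₂ : AnalyticOnNhd ℂ y₂ D)
    (hode₁ : ∀ z ∈ D, iteratedDeriv 2 y₁ z + Q z * y₁ z = 0)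
    (hode₂ : ∀ z ∈ D, iteratedDeriv 2 y₂ z + Q z * y₂ z = 0)
    (hW : ∃ z ∈ D, y₁ z * deriv y₂ z - deriv y₁ z * y₂ z ≠ 0) :
    ∀ z ∈ D, y₂ z ≠ 0 →
      AnalyticAt ℂ (fun w => y₁ w / y₂ w) z ∧
      deriv (fun w => y₁ w / y₂ w) z ≠ 0 ∧
      schwarzian (fun w => y₁ w / y₂ w) z = 2 * Q z := by
  have i2 : ∀ g : ℂ → ℂ, iteratedDeriv 2 g = deriv (deriv g) := by
    intro g; rw [iteratedDeriv_succ, iteratedDeriv_one]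
  have i3 : ∀ g : ℂ → ℂ, iteratedDeriv 3 g = deriv (deriv (deriv g)) := by
    intro g; rw [iteratedDeriv_succ, i2]
  obtain ⟨z₀, hz₀, hWz₀⟩ := hW
  set c := y₁ z₀ * deriv y₂ z₀ - deriv y₁ z₀ * y₂ z₀ with hc
  have hy₁' := hy₁.deriv
  have hy₂' := hy₂.deriv
  set W : ℂ → ℂ := fun w => y₁ w * deriv y₂ w - deriv y₁ w * y₂ w with hWdef
  have hWan : AnalyticOnNhd ℂ W D :=
    fun w hw => ((hy₁ w hw).mul (hy₂' w hw)).sub ((hy₁' w hw).mul (hy₂ w hw))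
  have hWd : ∀ w ∈ D, HasDerivAt W 0 w := by
    intro w hw
    have h1 := (hy₁ w hw).differentiableAt.hasDerivAt
    have h2 := (hy₂ w hw).differentiableAt.hasDerivAt
    have h3 := (hy₁' w hw).differentiableAt.hasDerivAt
    have h4 := (hy₂' w hw).differentiableAt.hasDerivAt
    have h := (h1.mul h4).sub (h3.mul h2)
    refine h.congr_deriv ?_
    have e1 := hode₁ w hw
    have e2 := hode₂ w hw
    rw [i2] at e1 e2
    linear_combination y₁ w * e2 - y₂ w * e1
  -- W is constant on D
  have hWconst : ∀ w ∈ D, W w = c := by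
    obtain ⟨ε, hε, hball⟩ := Metric.isOpen_iff.1 hDo z₀ hz₀
    have hfd0 : ∀ y ∈ Metric.ball z₀ ε, fderivWithin ℂ W (Metric.ball z₀ ε) y = 0 := by
      intro y hy
      rw [fderivWithin_of_isOpen Metric.isOpen_ball hy,
        (hWd y (hball hy)).hasFDerivAt.fderiv]
      refine ContinuousLinearMap.ext fun v => ?_
      simp
    have hloc : ∀ x ∈ Metric.ball z₀ ε, W x = c := by
      intro x hx
      exact (convex_ball z₀ ε).is_const_of_fderivWithin_eq_zero
        (fun y hy => ((hWan y (hball hy)).differentiableAt).differentiableWithinAt)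
        hfd0 hx (Metric.mem_ball_self hε)
    have heq : Set.EqOn W (fun _ => c) D := by
      apply hWan.eqOn_of_preconnected_of_eventuallyEq analyticOnNhd_const
        hDc.isPreconnected hz₀
      filter_upwards [Metric.ball_mem_nhds z₀ hε] with x hx using hloc x hx
    exact fun w hw => heq hw
  have hc0 : c ≠ 0 := by
    have := hWconst z₀ hz₀
    simpa [← this] using hWz₀
  clear_value c
  clear hc hWz₀
  intro z hz hy2z
  -- the open set where everything is nice
  have hU : IsOpen {w | w ∈ D ∧ y₂ w ≠ 0} := by
    have hset : {w | w ∈ D ∧ y₂ w ≠ 0} = D ∩ y₂ ⁻¹' {(0 : ℂ)}ᶜ := rfl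
    rw [hset]
    exact hy₂.continuousOn.isOpen_inter_preimage hDo isOpen_compl_singleton
  have hUz : {w | w ∈ D ∧ y₂ w ≠ 0} ∈ nhds z := hU.mem_nhds ⟨hz, hy2z⟩
  -- first derivative
  have hfd : ∀ w, w ∈ D → y₂ w ≠ 0 →
      HasDerivAt (fun w => y₁ w / y₂ w) (-c / y₂ w ^ 2) w := by
    intro w hw hw2
    have h := (hy₁ w hw).differentiableAt.hasDerivAt.div
      (hy₂ w hw).differentiableAt.hasDerivAt hw2
    refine h.congr_deriv ?_
    have hcw := hWconst w hw
    simp only [hWdef] at hcw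
    rw [← hcw]
    ring
  have hderivf : ∀ w, w ∈ D → y₂ w ≠ 0 →
      deriv (fun w => y₁ w / y₂ w) w = -c / y₂ w ^ 2 :=
    fun w hw hw2 => (hfd w hw hw2).deriv
  -- second derivative
  have hg2 : ∀ w, w ∈ D → y₂ w ≠ 0 →
      HasDerivAt (fun w => -c / y₂ w ^ 2) (2 * c * deriv y₂ w / y₂ w ^ 3) w := by
    intro w hw hw2
    have hp : HasDerivAt (fun w => y₂ w ^ 2) (2 * y₂ w ^ 1 * deriv y₂ w) w := by
      exact ((hy₂ w hw).differentiableAt.hasDerivAt.pow 2).congr_deriv (by norm_num)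
    have h := (hasDerivAt_const w (-c)).div hp (pow_ne_zero 2 hw2)
    refine h.congr_deriv ?_
    rw [div_eq_div_iff (pow_ne_zero 2 (pow_ne_zero 2 hw2)) (pow_ne_zero 3 hw2)]
    ring
  have hd2 : ∀ w, w ∈ D → y₂ w ≠ 0 →
      deriv (deriv (fun w => y₁ w / y₂ w)) w = 2 * c * deriv y₂ w / y₂ w ^ 3 := by
    intro w hw hw2
    have hUw : {x | x ∈ D ∧ y₂ x ≠ 0} ∈ nhds w := hU.mem_nhds ⟨hw, hw2⟩
    have hev : deriv (fun w => y₁ w / y₂ w) =ᶠ[nhds w] fun x => -c / y₂ x ^ 2 := by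
      filter_upwards [hUw] with x hx using hderivf x hx.1 hx.2
    rw [hev.deriv_eq]
    exact (hg2 w hw hw2).deriv
  -- third derivative at z
  have hy2'' : deriv (deriv y₂) z = -(Q z * y₂ z) := by
    have := hode₂ z hz
    rw [i2] at this
    exact eq_neg_of_add_eq_zero_left this
  have hg3 : HasDerivAt (fun w => 2 * c * deriv y₂ w / y₂ w ^ 3)
      ((2 * c * (-(Q z * y₂ z)) * y₂ z ^ 3 -
        2 * c * deriv y₂ z * (3 * y₂ z ^ 2 * deriv y₂ z)) / (y₂ z ^ 3) ^ 2) z := by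
    have hn : HasDerivAt (fun w => 2 * c * deriv y₂ w) (2 * c * (-(Q z * y₂ z))) z := by
      have := (hy₂' z hz).differentiableAt.hasDerivAt.const_mul (2 * c)
      rwa [hy2''] at this
    have hp : HasDerivAt (fun w => y₂ w ^ 3) (3 * y₂ z ^ 2 * deriv y₂ z) z := by
      exact ((hy₂ z hz).differentiableAt.hasDerivAt.pow 3).congr_deriv (by norm_num)
    exact hn.div hp (pow_ne_zero 3 hy2z)
  have hd3 : deriv (deriv (deriv (fun w => y₁ w / y₂ w))) z =
      (2 * c * (-(Q z * y₂ z)) * y₂ z ^ 3 -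
        2 * c * deriv y₂ z * (3 * y₂ z ^ 2 * deriv y₂ z)) / (y₂ z ^ 3) ^ 2 := by
    have hev : deriv (deriv fun w => y₁ w / y₂ w) =ᶠ[nhds z]
        fun w => 2 * c * deriv y₂ w / y₂ w ^ 3 := by
      filter_upwards [hUz] with w hw using hd2 w hw.1 hw.2
    rw [hev.deriv_eq]
    exact hg3.deriv
  refine ⟨(hy₁ z hz).div (hy₂ z hz) hy2z, ?_, ?_⟩
  · rw [hderivf z hz hy2z]
    exact div_ne_zero (neg_ne_zero.2 hc0) (pow_ne_zero 2 hy2z)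
  · rw [schwarzian, i3, i2, hd3, hd2 z hz hy2z, hderivf z hz hy2z]
    field_simp
    ring_nf
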